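/- arXiv:2307.10202 — 2 statements merged into one kernel-verified Lean document; each statement's English description precedes it below -/
import Mathlib

section
/- Let (F, φ) and (G, ψ) be representation graphs for a finitely bi-separated graph Ė = (E, C, D), let u be a vertex of F and v a vertex of G. If φ(Walk_u(F)) ⊆ ψ(Walk_v(G)), where Walk_u denotes the set of walks starting at the given vertex, then φ(Walk_u(F)) = ψ(Walk_v(G)). -/
/-- A directed graph: vertices, edges, source and range maps. -/
structure DGraph where
  V : Type
  E : Type
  s : E → V
  r : E → V

/-- A homomorphism of directed graphs. -/
structure GraphHom (F E : DGraph) where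
  v : F.V → E.V
  e : F.E → E.E
  hs : ∀ f, E.s (e f) = v (F.s f)
  hr : ∀ f, E.r (e f) = v (F.r f)

def GraphHom.id (F : DGraph) : GraphHom F F where
  v := fun x => x
  e := fun x => x
  hs := fun _ => rfl
  hr := fun _ => rfl

def GraphHom.comp {F G E : DGraph} (ψ : GraphHom G E) (α : GraphHom F G) :
    GraphHom F E where
  v := ψ.v ∘ α.v
  e := ψ.e ∘ α.e
  hs f := by simp [Function.comp, ψ.hs, α.hs]
  hr f := by simp [Function.comp, ψ.hr, α.hr]

/-- Edges of the double graph: `inl e` is `e`, `inr e` is the reversed edge `e*`. -/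
abbrev DE (G : DGraph) := G.E ⊕ G.E

/-- Source of an edge of the double graph. -/
def DGraph.ds (G : DGraph) : DE G → G.V := Sum.elim G.s G.r

/-- Range of an edge of the double graph. -/
def DGraph.dr (G : DGraph) : DE G → G.V := Sum.elim G.r G.s

/-- `IsWalk G u l v` : the list `l` of double-graph edges is a walk from `u` to `v`. -/
def IsWalk (G : DGraph) : G.V → List (DE G) → G.V → Prop
  | u, [], v => u = v
  | u, x :: l, v => G.ds x = u ∧ IsWalk G (G.dr x) l v

/-- A graph is connected if any two vertices are joined by a walk. -/
def DGraph.Connected (G : DGraph) : Prop := ∀ u v : G.V, ∃ l, IsWalk G u l v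

/-- A graph homomorphism is a covering if it is bijective on the sets of edges
with a given source (resp. a given range). -/
def IsCovering {F E : DGraph} (φ : GraphHom F E) : Prop :=
  (∀ w : F.V, Set.BijOn φ.e {f | F.s f = w} {g | E.s g = φ.v w}) ∧
  (∀ w : F.V, Set.BijOn φ.e {f | F.r f = w} {g | E.r g = φ.v w})

/-- The reversal involution on double-graph edges. -/
def DGraph.bar (G : DGraph) : DE G → DE G := Sum.swap

/-- Action of a graph homomorphism on double-graph edges. -/
def mapD {F E : DGraph} (φ : GraphHom F E) : DE F → DE E := Sum.map φ.e φ.e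

/-- A walk is reduced if it contains no spur `e e*` or `e* e`. -/
def Reduced {G : DGraph} (l : List (DE G)) : Prop :=
  List.Chain' (fun x y => y ≠ G.bar x) l

open scoped Classical in
/-- The reduction of a walk, deleting spurs until none remain. -/
noncomputable def red {G : DGraph} : List (DE G) → List (DE G)
  | [] => []
  | x :: l =>
    match red l with
    | [] => [x]
    | y :: l' => if y = G.bar x then l' else x :: y :: l'

/-- A graph is a tree if between any two vertices there is exactly one reduced walk. -/
def DGraph.IsTree (G : DGraph) : Prop :=
  ∀ u v : G.V, ∃! l : List (DE G), IsWalk G u l v ∧ Reduced l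

/-- A covering is universal if it maps onto every (connected) covering. -/
def IsUniversal {F E : DGraph} (φ : GraphHom F E) : Prop :=
  ∀ (G : DGraph) (ψ : GraphHom G E), G.Connected → IsCovering ψ →
    ∃ α : GraphHom F G, ψ.comp α = φ

/-- A (finitely) bi-separated graph `Ed = (E, C, D)`: a directed graph `E` together with
partitions `C_v` of `s⁻¹(v)` and `D_v` of `r⁻¹(v)` into finite nonempty blocks, such
that any block of `C` meets any block of `D` in at most one edge. -/
structure BisepGraph where
  G : DGraph
  C : Set (Set G.E)
  D : Set (Set G.E)
  hCne : ∀ X ∈ C, X.Nonempty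
  hDne : ∀ Y ∈ D, Y.Nonempty
  hCs : ∀ X ∈ C, ∀ e ∈ X, ∀ f ∈ X, G.s e = G.s f
  hDr : ∀ Y ∈ D, ∀ e ∈ Y, ∀ f ∈ Y, G.r e = G.r f
  hCpart : ∀ e : G.E, ∃! X, X ∈ C ∧ e ∈ X
  hDpart : ∀ e : G.E, ∃! Y, Y ∈ D ∧ e ∈ Y
  hCfin : ∀ X ∈ C, X.Finite
  hDfin : ∀ Y ∈ D, Y.Finite
  hCD : ∀ X ∈ C, ∀ Y ∈ D, Set.Subsingleton (X ∩ Y)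

/-- A representation graph `(F, φ)` for the bi-separated graph `Ed`: for every vertex
`w` of `F` and every block `X ∈ C` (resp. `Y ∈ D`) based at `φ(w)` there is exactly
one edge of `F` with source (resp. range) `w` whose `φ`-image lies in `X` (resp. `Y`). -/
def IsRepGraph (Ed : BisepGraph) (F : DGraph) (φ : GraphHom F Ed.G) : Prop :=
  (∀ w : F.V, ∀ X ∈ Ed.C, (∀ e ∈ X, Ed.G.s e = φ.v w) →
      ∃! f : F.E, F.s f = w ∧ φ.e f ∈ X) ∧
  (∀ w : F.V, ∀ Y ∈ Ed.D, (∀ e ∈ Y, Ed.G.r e = φ.v w) →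
      ∃! f : F.E, F.r f = w ∧ φ.e f ∈ Y)

/-- The image `φ(Walk_u(F))` of the set of walks of `F` starting at `u`: a walk of `E`
is recorded as a pair (starting vertex, list of double-graph edges). -/
def WalkImg {F E : DGraph} (φ : GraphHom F E) (u : F.V) : Set (E.V × List (DE E)) :=
  {pm | ∃ l v, IsWalk F u l v ∧ pm = (φ.v u, List.map (mapD φ) l)}

/-- A representation graph is irreducible if distinct vertices have distinct
images of based walk sets. -/
def IrreducibleRep {F E : DGraph} (φ : GraphHom F E) : Prop :=
  ∀ u v : F.V, u ≠ v → WalkImg φ u ≠ WalkImg φ v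

lemma isWalk_append {G : DGraph} {l₁ l₂ : List (DE G)} :
    ∀ {u w : G.V}, IsWalk G u (l₁ ++ l₂) w ↔ ∃ m, IsWalk G u l₁ m ∧ IsWalk G m l₂ w := by
  induction l₁ with
  | nil =>
    intro u w
    constructor
    · intro h; exact ⟨u, rfl, h⟩
    · rintro ⟨m, rfl, h⟩; exact h
  | cons x l ih =>
    intro u w
    constructor
    · rintro ⟨hx, h⟩
      obtain ⟨m, h1, h2⟩ := ih.mp h
      exact ⟨m, ⟨hx, h1⟩, h2⟩
    · rintro ⟨m, ⟨hx, h1⟩, h2⟩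
      exact ⟨hx, ih.mpr ⟨m, h1, h2⟩⟩

lemma isWalk_end_unique {G : DGraph} {l : List (DE G)} :
    ∀ {u w w' : G.V}, IsWalk G u l w → IsWalk G u l w' → w = w' := by
  induction l with
  | nil => intro u w w' h h'; exact h.symm.trans h'
  | cons x l ih => intro u w w' h h'; exact ih h.2 h'.2

lemma rep_s_unique (Ed : BisepGraph) (G : DGraph) (ψ : GraphHom G Ed.G)
    (hG : IsRepGraph Ed G ψ) {w : G.V} {e e' : G.E} (he : G.s e = w) (he' : G.s e' = w)
    {X : Set Ed.G.E} (hX : X ∈ Ed.C) (h1 : ψ.e e ∈ X) (h2 : ψ.e e' ∈ X) : e = e' := by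
  have hall : ∀ g ∈ X, Ed.G.s g = ψ.v w := by
    intro g hg
    rw [Ed.hCs X hX g hg (ψ.e e) h1, ψ.hs, he]
  obtain ⟨f, _, huniq⟩ := hG.1 w X hX hall
  rw [huniq e ⟨he, h1⟩, huniq e' ⟨he', h2⟩]

lemma rep_r_unique (Ed : BisepGraph) (G : DGraph) (ψ : GraphHom G Ed.G)
    (hG : IsRepGraph Ed G ψ) {w : G.V} {e e' : G.E} (he : G.r e = w) (he' : G.r e' = w)
    {Y : Set Ed.G.E} (hY : Y ∈ Ed.D) (h1 : ψ.e e ∈ Y) (h2 : ψ.e e' ∈ Y) : e = e' := by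
  have hall : ∀ g ∈ Y, Ed.G.r g = ψ.v w := by
    intro g hg
    rw [Ed.hDr Y hY g hg (ψ.e e) h1, ψ.hr, he]
  obtain ⟨f, _, huniq⟩ := hG.2 w Y hY hall
  rw [huniq e ⟨he, h1⟩, huniq e' ⟨he', h2⟩]

lemma lift_unique (Ed : BisepGraph) (G : DGraph) (ψ : GraphHom G Ed.G)
    (hG : IsRepGraph Ed G ψ) : ∀ (l₁ l₂ : List (DE G)) (w w₁ w₂ : G.V),
    IsWalk G w l₁ w₁ → IsWalk G w l₂ w₂ →
    List.map (mapD ψ) l₁ = List.map (mapD ψ) l₂ → l₁ = l₂ := by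
  intro l₁
  induction l₁ with
  | nil =>
    intro l₂ w w₁ w₂ _ _ hm
    cases l₂ with
    | nil => rfl
    | cons y l => simp at hm
  | cons x l ih =>
    intro l₂ w w₁ w₂ h1 h2 hm
    cases l₂ with
    | nil => simp at hm
    | cons y l' =>
      simp only [List.map_cons, List.cons.injEq] at hm
      have hxy : x = y := by
        cases x with
        | inl e =>
          cases y with
          | inl e' =>
            simp only [mapD, Sum.map_inl, Sum.inl.injEq] at hm
            have hse : G.s e = w := h1.1
            have hse' : G.s e' = w := h2.1
            obtain ⟨X, ⟨hXC, heX⟩, _⟩ := Ed.hCpart (ψ.e e)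
            have := rep_s_unique Ed G ψ hG hse hse' hXC heX (hm.1 ▸ heX)
            rw [this]
          | inr e' => simp [mapD] at hm
        | inr e =>
          cases y with
          | inl e' => simp [mapD] at hm
          | inr e' =>
            simp only [mapD, Sum.map_inr, Sum.inr.injEq] at hm
            have hse : G.r e = w := h1.1
            have hse' : G.r e' = w := h2.1
            obtain ⟨Y, ⟨hYD, heY⟩, _⟩ := Ed.hDpart (ψ.e e)
            have := rep_r_unique Ed G ψ hG hse hse' hYD heY (hm.1 ▸ heY)
            rw [this]
      subst hxy
      rw [ih l' (G.dr x) w₁ w₂ h1.2 h2.2 hm.2]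

/-- Lemma 3.9: if `φ(Walk_u(F)) ⊆ ψ(Walk_v(G))` for representation graphs `(F,φ)` and
`(G,ψ)`, then `φ(Walk_u(F)) = ψ(Walk_v(G))`. -/
theorem stmt_5 (Ed : BisepGraph) (F G : DGraph)
    (φ : GraphHom F Ed.G) (ψ : GraphHom G Ed.G)
    (hF : IsRepGraph Ed F φ) (hG : IsRepGraph Ed G ψ)
    (u : F.V) (v : G.V) (hsub : WalkImg φ u ⊆ WalkImg ψ v) :
    WalkImg φ u = WalkImg ψ v := by
  have huv : φ.v u = ψ.v v := by
    have hmem : (φ.v u, ([] : List (DE Ed.G))) ∈ WalkImg φ u :=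
      ⟨[], u, rfl, rfl⟩
    obtain ⟨l, w, hl, heq⟩ := hsub hmem
    exact (Prod.mk.injEq _ _ _ _ ▸ heq).1
  have key : ∀ (l : List (DE G)) (w : G.V), IsWalk G v l w →
      ∃ (l' : List (DE F)) (w' : F.V), IsWalk F u l' w' ∧
        List.map (mapD φ) l' = List.map (mapD ψ) l ∧ φ.v w' = ψ.v w := by
    intro l
    induction l using List.reverseRecOn with
    | nil =>
      intro w hw
      have : v = w := hw
      subst this
      exact ⟨[], u, rfl, rfl, huv⟩
    | append_singleton l₀ x ih =>
      intro w hw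
      obtain ⟨w₀, hl₀, hx⟩ := isWalk_append.mp hw
      obtain ⟨l', w', hwalk', hmap', hv'⟩ := ih w₀ hl₀
      cases x with
      | inl e =>
        have hse : G.s e = w₀ := hx.1
        have hre : G.r e = w := hx.2
        obtain ⟨X, ⟨hXC, heX⟩, _⟩ := Ed.hCpart (ψ.e e)
        have hXs : ∀ g ∈ X, Ed.G.s g = φ.v w' := by
          intro g hg
          rw [Ed.hCs X hXC g hg (ψ.e e) heX, ψ.hs, hse, hv']
        obtain ⟨f, ⟨hfs, hfX⟩, _⟩ := hF.1 w' X hXC hXs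
        have hwalkF : IsWalk F u (l' ++ [Sum.inl f]) (F.r f) :=
          isWalk_append.mpr ⟨w', hwalk', hfs, rfl⟩
        have hmem : (φ.v u, List.map (mapD φ) (l' ++ [Sum.inl f])) ∈ WalkImg φ u :=
          ⟨_, _, hwalkF, rfl⟩
        obtain ⟨l₂, w₂, hl₂, heq⟩ := hsub hmem
        have heq2 : List.map (mapD ψ) l₂ =
            List.map (mapD ψ) l₀ ++ [Sum.inl (φ.e f)] := by
          have h2 := (Prod.mk.injEq _ _ _ _ ▸ heq).2
          rw [← h2, List.map_append, hmap']
          rfl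
        rcases List.eq_nil_or_concat l₂ with rfl | ⟨l₃, y, rfl⟩
        · simp at heq2
        · rw [List.concat_eq_append] at hl₂ heq2
          rw [List.map_append] at heq2
          obtain ⟨h3, h4⟩ := List.append_inj' heq2 rfl
          have hy : mapD ψ y = Sum.inl (φ.e f) := by simpa using h4
          obtain ⟨m, hl₃, hyw⟩ := isWalk_append.mp hl₂
          have hl₃l₀ : l₃ = l₀ := lift_unique Ed G ψ hG l₃ l₀ v m w₀ hl₃ hl₀ h3
          subst hl₃l₀
          have hmw₀ : m = w₀ := isWalk_end_unique hl₃ hl₀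
          cases y with
          | inr e₂ => simp [mapD] at hy
          | inl e₂ =>
            have hψe₂ : ψ.e e₂ = φ.e f := by simpa [mapD] using hy
            have hse₂ : G.s e₂ = w₀ := by rw [← hmw₀]; exact hyw.1
            have he₂e : e₂ = e :=
              rep_s_unique Ed G ψ hG hse₂ hse hXC (hψe₂ ▸ hfX) heX
            have hfe : φ.e f = ψ.e e := by rw [← hψe₂, he₂e]
            refine ⟨l' ++ [Sum.inl f], F.r f, hwalkF, ?_, ?_⟩
            · rw [List.map_append, List.map_append, hmap']
              simp [mapD, hfe]
            · rw [← φ.hr, hfe, ψ.hr, hre]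
      | inr e =>
        have hre : G.r e = w₀ := hx.1
        have hse : G.s e = w := hx.2
        obtain ⟨Y, ⟨hYD, heY⟩, _⟩ := Ed.hDpart (ψ.e e)
        have hYr : ∀ g ∈ Y, Ed.G.r g = φ.v w' := by
          intro g hg
          rw [Ed.hDr Y hYD g hg (ψ.e e) heY, ψ.hr, hre, hv']
        obtain ⟨f, ⟨hfr, hfY⟩, _⟩ := hF.2 w' Y hYD hYr
        have hwalkF : IsWalk F u (l' ++ [Sum.inr f]) (F.s f) :=
          isWalk_append.mpr ⟨w', hwalk', hfr, rfl⟩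
        have hmem : (φ.v u, List.map (mapD φ) (l' ++ [Sum.inr f])) ∈ WalkImg φ u :=
          ⟨_, _, hwalkF, rfl⟩
        obtain ⟨l₂, w₂, hl₂, heq⟩ := hsub hmem
        have heq2 : List.map (mapD ψ) l₂ =
            List.map (mapD ψ) l₀ ++ [Sum.inr (φ.e f)] := by
          have h2 := (Prod.mk.injEq _ _ _ _ ▸ heq).2
          rw [← h2, List.map_append, hmap']
          rfl
        rcases List.eq_nil_or_concat l₂ with rfl | ⟨l₃, y, rfl⟩
        · simp at heq2
        · rw [List.concat_eq_append] at hl₂ heq2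
          rw [List.map_append] at heq2
          obtain ⟨h3, h4⟩ := List.append_inj' heq2 rfl
          have hy : mapD ψ y = Sum.inr (φ.e f) := by simpa using h4
          obtain ⟨m, hl₃, hyw⟩ := isWalk_append.mp hl₂
          have hl₃l₀ : l₃ = l₀ := lift_unique Ed G ψ hG l₃ l₀ v m w₀ hl₃ hl₀ h3
          subst hl₃l₀
          have hmw₀ : m = w₀ := isWalk_end_unique hl₃ hl₀
          cases y with
          | inl e₂ => simp [mapD] at hy
          | inr e₂ =>
            have hψe₂ : ψ.e e₂ = φ.e f := by simpa [mapD] using hy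
            have hre₂ : G.r e₂ = w₀ := by rw [← hmw₀]; exact hyw.1
            have he₂e : e₂ = e :=
              rep_r_unique Ed G ψ hG hre₂ hre hYD (hψe₂ ▸ hfY) heY
            have hfe : φ.e f = ψ.e e := by rw [← hψe₂, he₂e]
            refine ⟨l' ++ [Sum.inr f], F.s f, hwalkF, ?_, ?_⟩
            · rw [List.map_append, List.map_append, hmap']
              simp [mapD, hfe]
            · rw [← φ.hs, hfe, ψ.hs, hse]
  refine Set.Subset.antisymm hsub ?_
  rintro pm ⟨l, w, hl, rfl⟩
  obtain ⟨l', w', h1, h2, _⟩ := key l w hl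
  exact ⟨l', w', h1, by rw [huv, h2]⟩
end

section
/- Let (T, η) be a covering of a connected graph S where T is a tree, let x be a vertex of T, and let p, q be walks in T starting at x. Then r(p) = r(q) if and only if the reductions of η(p) and η(q) are equal. -/
section Aux
variable {G : DGraph}

lemma bar_bar (x : DE G) : G.bar (G.bar x) = x := by cases x <;> rfl

lemma ds_bar (x : DE G) : G.ds (G.bar x) = G.dr x := by cases x <;> rfl

lemma walk_range_unique {u v v' : G.V} {l : List (DE G)}
    (h : IsWalk G u l v) (h' : IsWalk G u l v') : v = v' := by
  induction l generalizing u with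
  | nil => exact h.symm.trans h'
  | cons x l ih => exact ih h.2 h'.2

lemma red_isWalk {u v : G.V} {l : List (DE G)}
    (h : IsWalk G u l v) : IsWalk G u (red l) v := by
  classical
  induction l generalizing u with
  | nil => exact h
  | cons x l ih =>
    obtain ⟨hx, hl⟩ := h
    have hr := ih hl
    rw [red]
    rcases hred : red (G := G) l with _ | ⟨y, l'⟩
    · rw [hred] at hr; exact ⟨hx, hr⟩
    · rw [hred] at hr
      show IsWalk G u (if y = G.bar x then l' else x :: y :: l') v
      by_cases hy : y = G.bar x
      · rw [if_pos hy]
        rw [hy] at hr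
        have h2 := hr.2
        have hh : G.dr (G.bar x) = u := by rw [← hx]; cases x <;> rfl
        rwa [hh] at h2
      · rw [if_neg hy]
        exact ⟨hx, hr⟩

lemma red_reduced (l : List (DE G)) : Reduced (red l) := by
  induction l with
  | nil => exact List.isChain_nil
  | cons x l ih =>
    rw [red]
    rcases hred : red (G := G) l with _ | ⟨y, l'⟩
    · exact List.isChain_singleton _
    · rw [hred] at ih
      by_cases hy : y = G.bar x
      · simp only [hy, if_pos rfl]
        exact ih.tail
      · simp only [if_neg hy]
        exact List.isChain_cons_cons.2 ⟨hy, ih⟩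

lemma red_eq_self_of_reduced {l : List (DE G)} (h : Reduced l) : red l = l := by
  induction l with
  | nil => rfl
  | cons x l ih =>
    rw [red]
    have ht : Reduced l := h.tail
    rw [ih ht]
    rcases l with _ | ⟨y, l'⟩
    · rfl
    · have hy : y ≠ G.bar x := (List.isChain_cons_cons.1 h).1
      simp [hy]

variable {F E : DGraph} {φ : GraphHom F E}

lemma mapD_bar (x : DE F) : mapD φ (F.bar x) = E.bar (mapD φ x) := by
  cases x <;> rfl

lemma ds_mapD (x : DE F) : E.ds (mapD φ x) = φ.v (F.ds x) := by
  cases x with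
  | inl e => exact φ.hs e
  | inr e => exact φ.hr e

lemma dr_mapD (x : DE F) : E.dr (mapD φ x) = φ.v (F.dr x) := by
  cases x with
  | inl e => exact φ.hr e
  | inr e => exact φ.hs e

lemma map_isWalk {u v : F.V} {l : List (DE F)} (h : IsWalk F u l v) :
    IsWalk E (φ.v u) (List.map (mapD φ) l) (φ.v v) := by
  induction l generalizing u with
  | nil => exact congrArg φ.v h
  | cons x l ih =>
    refine ⟨by rw [ds_mapD, h.1], ?_⟩
    rw [dr_mapD]
    exact ih h.2

lemma mapD_inj (hcov : IsCovering φ) {y y' : DE F}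
    (hs : F.ds y = F.ds y') (h : mapD φ y = mapD φ y') : y = y' := by
  cases y with
  | inl e =>
    cases y' with
    | inl e' =>
      have := (hcov.1 (F.s e)).injOn rfl hs.symm (Sum.inl.inj h)
      rw [this]
    | inr e' => exact absurd h (by simp [mapD])
  | inr e =>
    cases y' with
    | inl e' => exact absurd h (by simp [mapD])
    | inr e' =>
      have := (hcov.2 (F.r e)).injOn rfl hs.symm (Sum.inr.inj h)
      rw [this]

lemma map_walk_inj (hcov : IsCovering φ) {u v v' : F.V} {l l' : List (DE F)}
    (h : IsWalk F u l v) (h' : IsWalk F u l' v')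
    (heq : List.map (mapD φ) l = List.map (mapD φ) l') : l = l' := by
  induction l generalizing u l' with
  | nil => simpa using heq.symm
  | cons x l ih =>
    rcases l' with _ | ⟨x', l''⟩
    · simp at heq
    · simp only [List.map_cons, List.cons.injEq] at heq
      have hx : x = x' := mapD_inj hcov (h.1.trans h'.1.symm) heq.1
      subst hx
      exact congrArg (x :: ·) (ih h.2 h'.2 heq.2)

lemma red_map (hcov : IsCovering φ) {u v : F.V} {l : List (DE F)}
    (h : IsWalk F u l v) :
    red (List.map (mapD φ) l) = List.map (mapD φ) (red l) := by
  induction l generalizing u with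
  | nil => rfl
  | cons x l ih =>
    obtain ⟨hx, hl⟩ := h
    have ihl := ih hl
    rw [List.map_cons, red, red, ihl]
    have hrw : IsWalk F (F.dr x) (red l) v := red_isWalk hl
    rcases hred : red (G := F) l with _ | ⟨y, l'⟩
    · rfl
    · rw [hred] at hrw
      simp only [List.map_cons]
      by_cases hy : y = F.bar x
      · rw [if_pos (by rw [hy, mapD_bar]), if_pos hy]
      · have hne : mapD φ y ≠ E.bar (mapD φ x) := by
          intro hc
          exact hy (mapD_inj hcov (hrw.1.trans (ds_bar x).symm)
            (hc.trans (mapD_bar x).symm))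
        rw [if_neg hne, if_neg hy]
        simp

end Aux

/-- Lemma 5.1: for a covering `(T, η)` of a connected graph `S` with `T` a tree and
walks `p, q` in `T` starting at the same vertex `x`, the walks have the same range
iff the reductions of their images under `η` coincide. -/
theorem stmt_16 {T S : DGraph} (hT : T.Connected) (hS : S.Connected)
    (η : GraphHom T S) (hcov : IsCovering η) (htree : T.IsTree)
    (x : T.V) (lp lq : List (DE T)) (vp vq : T.V)
    (hp : IsWalk T x lp vp) (hq : IsWalk T x lq vq) :
    vp = vq ↔ red (List.map (mapD η) lp) = red (List.map (mapD η) lq) := by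
  constructor
  · intro h
    subst h
    have h1 : IsWalk T x (red lp) vp ∧ Reduced (red lp) :=
      ⟨red_isWalk hp, red_reduced lp⟩
    have h2 : IsWalk T x (red lq) vp ∧ Reduced (red lq) :=
      ⟨red_isWalk hq, red_reduced lq⟩
    obtain ⟨l, -, huniq⟩ := htree x vp
    have : red lp = red lq := (huniq _ h1).trans (huniq _ h2).symm
    rw [red_map hcov hp, red_map hcov hq, this]
  · intro h
    rw [red_map hcov hp, red_map hcov hq] at h
    have := map_walk_inj hcov (red_isWalk hp) (red_isWalk hq) h
    exact walk_range_unique (this ▸ red_isWalk hp) (red_isWalk hq)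
end
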